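/- Let A be a commutative Q-algebra, p an element of A, c a natural number, and P_0, ..., P_r polynomials in A[X]. Define the A-linear operator D_p on A[[q]] by D_p F = q*(dF/dq) + p*F. Suppose the sequence (a_n) in A satisfies sum_{d=0}^{r} q^d * P_d(D_p)( sum_n a_n q^n ) = 0 in A[[q]]. Then sum_{d=0}^{r} q^d * P_d(D_p)( prod_{m=1}^{d} (D_p + m)^c ( sum_n ( prod_{m=1}^{n} (p+m)^c ) * a_n * q^n ) ) = 0. (This is the general principle, valid when rank A^1(E) = 1, by which the hyperplane twist H_d = prod_{m=1}^{d}(p+m)^c of a cohomology-valued series transforms its differential equation into the same form with the extra factors prod_{m=1}^{d}(D+m)^c.) -/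

import Mathlib

open PowerSeries

/-- The `A`-linear operator `D_p F = q * dF/dq + p * F` on `A[[q]]`. -/
noncomputable def Dp {A : Type*} [CommRing A] [Algebra ℚ A] (p : A) (F : A⟦X⟧) : A⟦X⟧ :=
  X * derivative A F + PowerSeries.C p * F

/-- Substitution of an operator `E` on `A[[q]]` into a polynomial `P ∈ A[X]`:
`P(E) = Σ cₙ Eⁿ`, the coefficients acting by multiplication. -/
noncomputable def applyPoly {A : Type*} [CommRing A] [Algebra ℚ A] (P : Polynomial A)
    (E : A⟦X⟧ → A⟦X⟧) (F : A⟦X⟧) : A⟦X⟧ :=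
  P.sum fun n cn => PowerSeries.C cn * E^[n] F

/-- The hyperplane-twist operator `∏_{m=1}^{d} (D_p + m)^c` on `A[[q]]`
(the empty product `d = 0` being the identity). -/
noncomputable def twistOp {A : Type*} [CommRing A] [Algebra ℚ A] (p : A) (c : ℕ) :
    ℕ → A⟦X⟧ → A⟦X⟧
  | 0 => id
  | d + 1 => fun F => (fun G => Dp p G + (d + 1) • G)^[c] (twistOp p c d F)

section Aux

variable {A : Type*} [CommRing A] [Algebra ℚ A]

lemma coeff_Dp (p : A) (F : A⟦X⟧) (n : ℕ) :
    coeff n (Dp p F) = (p + n) * coeff n F := by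
  unfold Dp
  rw [map_add, coeff_C_mul]
  cases n with
  | zero => simp [coeff_zero_X_mul]
  | succ k =>
      rw [coeff_succ_X_mul, coeff_derivative]
      push_cast
      ring

lemma coeff_Dp_iter (p : A) (F : A⟦X⟧) (k n : ℕ) :
    coeff n ((Dp p)^[k] F) = (p + n) ^ k * coeff n F := by
  induction k with
  | zero => simp
  | succ k ih => rw [Function.iterate_succ_apply', coeff_Dp, ih, pow_succ]; ring

lemma coeff_applyPoly (P : Polynomial A) (p : A) (F : A⟦X⟧) (n : ℕ) :
    coeff n (applyPoly P (Dp p) F) = P.eval (p + n) * coeff n F := by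
  unfold applyPoly
  rw [Polynomial.sum_def, map_sum, Polynomial.eval_eq_sum, Polynomial.sum_def,
    Finset.sum_mul]
  refine Finset.sum_congr rfl fun k _ => ?_
  rw [coeff_C_mul, coeff_Dp_iter]; ring

lemma coeff_shift_iter (p : A) (s c : ℕ) (F : A⟦X⟧) (n : ℕ) :
    coeff n ((fun G => Dp p G + s • G)^[c] F) = (p + n + s) ^ c * coeff n F := by
  induction c with
  | zero => simp
  | succ k ih =>
      rw [Function.iterate_succ_apply', map_add, coeff_Dp, map_nsmul, ih, pow_succ,
        nsmul_eq_mul]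
      ring

lemma coeff_twistOp (p : A) (c d : ℕ) (F : A⟦X⟧) (n : ℕ) :
    coeff n (twistOp p c d F)
      = (∏ m ∈ Finset.Icc 1 d, (p + n + m) ^ c) * coeff n F := by
  induction d with
  | zero => simp [twistOp]
  | succ d ih =>
      have : ((d : A) + 1) = ((d + 1 : ℕ) : A) := by push_cast; ring
      rw [twistOp]
      rw [show (fun G : A⟦X⟧ => Dp p G + (↑d + 1) • G) = fun G => Dp p G + (d + 1) • G
        from rfl]
      rw [coeff_shift_iter, ih, Finset.prod_Icc_succ_top (Nat.succ_le_succ (Nat.zero_le d)),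
        mul_assoc]
      push_cast
      ring_nf

lemma prod_shift (p : A) (c d N : ℕ) (hd : d ≤ N) :
    (∏ m ∈ Finset.Icc 1 d, (p + ((N - d : ℕ) : A) + m) ^ c) *
      ∏ m ∈ Finset.Icc 1 (N - d), (p + m) ^ c
    = ∏ m ∈ Finset.Icc 1 N, (p + m) ^ c := by
  rw [show ∀ b, Finset.Icc 1 b = Finset.Ioc 0 b from fun b => Finset.Icc_add_one_left_eq_Ioc 0 b,
    show ∀ b, Finset.Icc 1 b = Finset.Ioc 0 b from fun b => Finset.Icc_add_one_left_eq_Ioc 0 b,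
    show ∀ b, Finset.Icc 1 b = Finset.Ioc 0 b from fun b => Finset.Icc_add_one_left_eq_Ioc 0 b]
  have h1 : (∏ m ∈ Finset.Ioc 0 d, (p + ((N - d : ℕ) : A) + m) ^ c)
      = ∏ m ∈ Finset.Ioc (N - d) N, (p + m) ^ c := by
    rw [show Finset.Ioc (N - d) N
        = Finset.map (addLeftEmbedding (N - d)) (Finset.Ioc 0 d) by
      rw [Finset.map_add_left_Ioc]; congr 1 <;> omega]
    rw [Finset.prod_map]
    refine Finset.prod_congr rfl fun m _ => ?_
    simp only [addLeftEmbedding, Function.Embedding.coeFn_mk]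
    push_cast
    ring
  rw [h1, mul_comm, Finset.prod_Ioc_consecutive _ (Nat.zero_le _) (Nat.sub_le N d)]

end Aux

/-- The general hyperplane-twist principle for `rank A¹(E) = 1`: if the series
`Σ aₙ qⁿ` is annihilated by `Σ_{d=0}^{r} q^d P_d(D_p)`, then the twisted series
`Σ (∏_{m=1}^{n} (p+m)^c) aₙ qⁿ` is annihilated by
`Σ_{d=0}^{r} q^d P_d(D_p) ∏_{m=1}^{d} (D_p + m)^c`. -/

theorem hyperplane_twist_principle {A : Type*} [CommRing A] [Algebra ℚ A]
    (p : A) (c r : ℕ) (P : ℕ → Polynomial A) (a : ℕ → A)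
    (h : ∑ d ∈ Finset.range (r + 1),
      (X : A⟦X⟧) ^ d * applyPoly (P d) (Dp p) (PowerSeries.mk a) = 0) :
    ∑ d ∈ Finset.range (r + 1),
      (X : A⟦X⟧) ^ d * applyPoly (P d) (Dp p)
        (twistOp p c d
          (PowerSeries.mk fun n =>
            (∏ m ∈ Finset.Icc 1 n, (p + (m : A)) ^ c) * a n)) = 0 := by
  ext N
  have hN := congrArg (coeff N) h
  rw [map_sum, map_zero] at hN
  rw [map_sum, map_zero]
  have key : ∀ d ∈ Finset.range (r + 1),
      coeff N ((X : A⟦X⟧) ^ d * applyPoly (P d) (Dp p)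
        (twistOp p c d (PowerSeries.mk fun n =>
          (∏ m ∈ Finset.Icc 1 n, (p + (m : A)) ^ c) * a n)))
      = (∏ m ∈ Finset.Icc 1 N, (p + (m : A)) ^ c) *
        coeff N ((X : A⟦X⟧) ^ d * applyPoly (P d) (Dp p) (PowerSeries.mk a)) := by
    intro d _
    rw [coeff_X_pow_mul', coeff_X_pow_mul']
    split
    · next hdN =>
        rw [coeff_applyPoly, coeff_twistOp, coeff_applyPoly, coeff_mk, coeff_mk,
          ← prod_shift p c d N hdN]
        ring
    · rw [mul_zero]
  rw [Finset.sum_congr rfl key, ← Finset.mul_sum, hN, mul_zero]
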